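/- Let n ≥ 1, N ≥ 0 be integers and let s_1,…,s_n be nonnegative integers with S = s_1 + ⋯ + s_n. Then ∑ ∏_{i=1}^{n} (s_i + c_i(σ))! / s_i! = ∏_{r=0}^{N−1} (S + n + r), where the sum ranges over all sequences σ = (j_1,…,j_N) ∈ {1,…,n}^N and c_i(σ) = #{l ∈ {1,…,N} : j_l = i} is the number of occurrences of i in σ. -/

import Mathlib

/-- For nonnegative integers `s_1, …, s_n` with sum `S`,
`∑_{σ ∈ {1,…,n}^N} ∏_i (s_i + c_i(σ))! / s_i! = ∏_{r=0}^{N-1} (S + n + r)`,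
where `c_i(σ)` is the number of occurrences of `i` in `σ`. -/
theorem stmt12 (n N : ℕ) (hn : 1 ≤ n) (s : Fin n → ℕ) :
    ∑ σ : Fin N → Fin n,
        ∏ i : Fin n,
          ((Nat.factorial (s i + (Finset.univ.filter fun l => σ l = i).card) : ℚ) /
            (Nat.factorial (s i) : ℚ)) =
      ∏ r ∈ Finset.range N, (((∑ i, s i) + n + r : ℕ) : ℚ) := by
  induction N with
  | zero => simp [div_self (by positivity : (∏ x : Fin n, ((s x).factorial:ℚ)) ≠ 0)]
  | succ N ih =>
    rw [← (Fin.consEquiv fun _ : Fin (N+1) => Fin n).sum_comp (M := ℚ)]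
    rw [Fintype.sum_prod_type]
    have hcard : ∀ (j : Fin n) (σ' : Fin N → Fin n) (i : Fin n),
        (Finset.univ.filter fun l => (Fin.cons j σ' : Fin (N+1) → Fin n) l = i).card =
          (if j = i then 1 else 0) + (Finset.univ.filter fun l => σ' l = i).card := by
      intro j σ' i
      rw [Finset.card_filter, Finset.card_filter, Fin.sum_univ_succ]
      simp
    have key : ∀ (j : Fin n) (σ' : Fin N → Fin n),
        (∏ i : Fin n,
          ((Nat.factorial (s i + (Finset.univ.filter fun l =>
              (Fin.consEquiv fun _ : Fin (N+1) => Fin n) (j, σ') l = i).card) : ℚ) /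
            (Nat.factorial (s i) : ℚ))) =
        ((s j + (Finset.univ.filter fun l => σ' l = j).card + 1 : ℕ) : ℚ) *
          ∏ i : Fin n,
            ((Nat.factorial (s i + (Finset.univ.filter fun l => σ' l = i).card) : ℚ) /
              (Nat.factorial (s i) : ℚ)) := by
      intro j σ'
      simp only [Fin.consEquiv_apply, hcard]
      rw [← Finset.mul_prod_erase Finset.univ _ (Finset.mem_univ j),
        ← Finset.mul_prod_erase Finset.univ
          (fun i => ((Nat.factorial (s i + (Finset.univ.filter fun l => σ' l = i).card) : ℚ) /
            (Nat.factorial (s i) : ℚ))) (Finset.mem_univ j)]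
      rw [← mul_assoc]
      congr 1
      · simp only [if_pos rfl, if_true]
        have : s j + (1 + (Finset.univ.filter fun l => σ' l = j).card) =
            (s j + (Finset.univ.filter fun l => σ' l = j).card) + 1 := by ring
        rw [this, Nat.factorial_succ]
        push_cast
        field_simp
      · apply Finset.prod_congr rfl
        intro i hi
        rw [if_neg (Finset.ne_of_mem_erase hi).symm]
        simp
    calc ∑ j : Fin n, ∑ σ' : Fin N → Fin n, (∏ i : Fin n,
          ((Nat.factorial (s i + (Finset.univ.filter fun l =>
              (Fin.consEquiv fun _ : Fin (N+1) => Fin n) (j, σ') l = i).card) : ℚ) /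
            (Nat.factorial (s i) : ℚ)))
        = ∑ σ' : Fin N → Fin n, ∑ j : Fin n,
            ((s j + (Finset.univ.filter fun l => σ' l = j).card + 1 : ℕ) : ℚ) *
            ∏ i : Fin n,
              ((Nat.factorial (s i + (Finset.univ.filter fun l => σ' l = i).card) : ℚ) /
                (Nat.factorial (s i) : ℚ)) := by
          rw [Finset.sum_comm]
          exact Finset.sum_congr rfl fun σ' _ => Finset.sum_congr rfl fun j _ => key j σ'
      _ = (((∑ i, s i) + n + N : ℕ) : ℚ) * ∑ σ' : Fin N → Fin n, ∏ i : Fin n,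
              ((Nat.factorial (s i + (Finset.univ.filter fun l => σ' l = i).card) : ℚ) /
                (Nat.factorial (s i) : ℚ)) := by
          rw [Finset.mul_sum]
          apply Finset.sum_congr rfl
          intro σ' _
          rw [← Finset.sum_mul]
          congr 1
          have hsum : ∑ j : Fin n, (Finset.univ.filter fun l => σ' l = j).card = N := by
            simp only [Finset.card_filter]
            rw [Finset.sum_comm]
            simp
          rw [← Nat.cast_sum]
          congr 1
          simp [Finset.sum_add_distrib, hsum]
          ring
      _ = ∏ r ∈ Finset.range (N+1), (((∑ i, s i) + n + r : ℕ) : ℚ) := by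
          rw [ih, Finset.prod_range_succ]
          ring
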